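/- Let ρ : ℝ^d → ℝ be convex, positively homogeneous of degree one, nonnegative, and satisfy ρ(x) = 0 if and only if x = 0; let 𝒫 = {z ∈ ℝ^d : z·q ≤ ρ(q) for all q ∈ ℝ^d} be its dual set. Let K ⊂ ℝ^d be a nonempty compact convex set, define H(z) = min{z·q : q ∈ K}, and let q_0 ∈ ℝ^d with q_0 ∉ K. Suppose z* ∈ 𝒫 maximizes H(z) − z·q_0 over 𝒫 and H is differentiable at z*. Then z*·(∇H(z*) − q_0) > 0; that is, the average per-consumer grid revenue under the optimal prices z* is strictly positive. -/

import Mathlib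

open scoped RealInnerProductSpace
open Pointwise

/-- strictly positive revenue under optimal prices: with `ρ` convex,
positively one-homogeneous, nonnegative and vanishing only at `0`, `𝒫` its dual set, `K`
nonempty compact convex, `H(z) = min{z·q : q ∈ K}`, and `q₀ ∉ K`, if `z* ∈ 𝒫` maximizes
`H(z) − z·q₀` over `𝒫` and `H` is differentiable at `z*` with gradient `∇H(z*)`, then
`z*·(∇H(z*) − q₀) > 0`. -/
theorem positive_revenue (d : ℕ) (ρ : EuclideanSpace ℝ (Fin d) → ℝ)
    (hconv : ConvexOn ℝ Set.univ ρ)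
    (hhom : ∀ α : ℝ, 0 ≤ α → ∀ q, ρ (α • q) = α * ρ q)
    (hnonneg : ∀ x, 0 ≤ ρ x)
    (hzero : ∀ x, ρ x = 0 ↔ x = 0)
    (K : Set (EuclideanSpace ℝ (Fin d))) (hKne : K.Nonempty) (hKc : IsCompact K)
    (hKconv : Convex ℝ K) (q₀ : EuclideanSpace ℝ (Fin d)) (hq₀ : q₀ ∉ K)
    (H : EuclideanSpace ℝ (Fin d) → ℝ)
    (hH : ∀ z, H z = sInf ((fun q => ⟪z, q⟫) '' K))
    (zstar : EuclideanSpace ℝ (Fin d))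
    (hzP : ∀ q, ⟪zstar, q⟫ ≤ ρ q)
    (hmax : ∀ z : EuclideanSpace ℝ (Fin d), (∀ q, ⟪z, q⟫ ≤ ρ q) →
      H z - ⟪z, q₀⟫ ≤ H zstar - ⟪zstar, q₀⟫)
    (g : EuclideanSpace ℝ (Fin d)) (hg : HasGradientAt H g zstar) :
    0 < ⟪zstar, g - q₀⟫ := by
  -- homogeneity of H
  have hHhom : ∀ t : ℝ, 0 ≤ t → ∀ z, H (t • z) = t * H z := by
    intro t ht z
    rw [hH, hH]
    have himg : (fun q => ⟪t • z, q⟫) '' K = t • ((fun q => ⟪z, q⟫) '' K) := by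
      rw [← Set.image_smul, Set.image_image]
      exact Set.image_congr fun q _ => real_inner_smul_left z q t
    rw [himg, Real.sInf_smul_of_nonneg ht, smul_eq_mul]
  -- Euler: ⟪g, zstar⟫ = H zstar
  have hEuler : ⟪g, zstar⟫ = H zstar := by
    have h1 : HasDerivAt (fun α : ℝ => α • zstar) zstar 1 := by
      simpa using (hasDerivAt_id (1:ℝ)).smul_const zstar
    have h2 : HasFDerivAt H ((InnerProductSpace.toDual ℝ _) g) ((1:ℝ) • zstar) := by
      simpa using hg.hasFDerivAt
    have h3 : HasDerivAt (fun α : ℝ => H (α • zstar)) ⟪g, zstar⟫ 1 := by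
      have h3' := h2.comp_hasDerivAt 1 h1; simp at h3'; exact h3'
    have h4 : HasDerivAt (fun α : ℝ => α * H zstar) (H zstar) 1 := by
      simpa using (hasDerivAt_id (1:ℝ)).mul_const (H zstar)
    have heq : (fun α : ℝ => H (α • zstar)) =ᶠ[nhds 1] fun α : ℝ => α * H zstar := by
      filter_upwards [Ioi_mem_nhds (show (0:ℝ) < 1 by norm_num)] with α hα
      exact hHhom α (le_of_lt hα) zstar
    exact (h3.unique (h4.congr_of_eventuallyEq heq))
  -- lower bound on ρ
  obtain ⟨k, hk⟩ := id hKne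
  have hnt : Nontrivial (EuclideanSpace ℝ (Fin d)) :=
    ⟨⟨q₀, k, fun h => hq₀ (h ▸ hk)⟩⟩
  have hρcont : Continuous ρ :=
    continuousOn_univ.mp (hconv.continuousOn isOpen_univ)
  obtain ⟨x₀, hx₀s, hx₀min⟩ := (isCompact_sphere (0 : EuclideanSpace ℝ (Fin d)) 1).exists_isMinOn
    (NormedSpace.sphere_nonempty.mpr zero_le_one) hρcont.continuousOn
  have hx₀ne : x₀ ≠ 0 := by
    intro h
    have := mem_sphere_zero_iff_norm.mp hx₀s
    rw [h, norm_zero] at this; norm_num at this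
  set c := ρ x₀ with hc
  have hcpos : 0 < c := lt_of_le_of_ne (hnonneg x₀) fun h => hx₀ne ((hzero x₀).mp h.symm)
  have hρlb : ∀ q, c * ‖q‖ ≤ ρ q := by
    intro q
    rcases eq_or_ne q 0 with rfl | hq
    · simp [(hzero 0).mpr rfl]
    · have hqn : (0:ℝ) < ‖q‖ := norm_pos_iff.mpr hq
      have hu : (‖q‖⁻¹ • q) ∈ Metric.sphere (0 : EuclideanSpace ℝ (Fin d)) 1 := by
        rw [mem_sphere_zero_iff_norm, norm_smul, norm_inv, norm_norm]
        field_simp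
      have h2 : ρ (‖q‖⁻¹ • q) = ‖q‖⁻¹ * ρ q := hhom _ (by positivity) q
      have h3 : c ≤ ‖q‖⁻¹ * ρ q := h2 ▸ hx₀min hu
      calc c * ‖q‖ ≤ (‖q‖⁻¹ * ρ q) * ‖q‖ := mul_le_mul_of_nonneg_right h3 hqn.le
        _ = ρ q := by field_simp
  -- separation
  obtain ⟨f, u, hfa, hfq₀⟩ := geometric_hahn_banach_closed_point hKconv hKc.isClosed hq₀
  set v := (InnerProductSpace.toDual ℝ (EuclideanSpace ℝ (Fin d))).symm f with hv
  have hfv : ∀ w, f w = ⟪v, w⟫ := fun w => (InnerProductSpace.toDual_symm_apply).symm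
  set z := -v with hz
  have hzinner : ∀ w, ⟪z, w⟫ = -f w := fun w => by
    rw [hfv w, hz, inner_neg_left]
  have hHz : -u ≤ H z := by
    rw [hH]
    apply le_csInf (hKne.image _)
    rintro b ⟨q, hqK, rfl⟩
    show -u ≤ ⟪z, q⟫
    rw [hzinner]
    linarith [hfa q hqK]
  have hzq₀ : ⟪z, q₀⟫ < -u := by rw [hzinner]; linarith
  have hpos : 0 < H z - ⟪z, q₀⟫ := by linarith
  have hzne : z ≠ 0 := by
    intro h
    have h0 : H z = 0 := by
      rw [h, hH]
      have himg : (fun q : EuclideanSpace ℝ (Fin d) => ⟪(0:EuclideanSpace ℝ (Fin d)), q⟫) '' K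
          = {(0:ℝ)} := by
        rw [show (fun q : EuclideanSpace ℝ (Fin d) => ⟪(0:EuclideanSpace ℝ (Fin d)), q⟫)
            = fun _ => (0:ℝ) from funext fun q => inner_zero_left q]
        exact hKne.image_const 0
      rw [himg, csInf_singleton]
    rw [h] at hpos
    rw [show ⟪(0:EuclideanSpace ℝ (Fin d)), q₀⟫ = (0:ℝ) from inner_zero_left q₀] at hpos
    rw [h] at h0
    rw [h0] at hpos
    norm_num at hpos
  -- scale z into 𝒫
  have hznorm : (0:ℝ) < ‖z‖ := norm_pos_iff.mpr hzne
  set t := c / ‖z‖ with hT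
  have htpos : 0 < t := div_pos hcpos hznorm
  have htz : ∀ q, ⟪t • z, q⟫ ≤ ρ q := by
    intro q
    rw [real_inner_smul_left]
    calc t * ⟪z, q⟫ ≤ t * (‖z‖ * ‖q‖) :=
          mul_le_mul_of_nonneg_left (real_inner_le_norm z q) htpos.le
      _ = c * ‖q‖ := by rw [hT]; field_simp
      _ ≤ ρ q := hρlb q
  -- finish
  have hkey : 0 < H zstar - ⟪zstar, q₀⟫ := by
    have := hmax (t • z) htz
    rw [hHhom t htpos.le z, real_inner_smul_left] at this
    nlinarith
  have hcomm : ⟪zstar, g⟫ = H zstar := by rw [real_inner_comm]; exact hEuler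
  rw [inner_sub_right, hcomm]
  linarith
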